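/- Let n ≥ 2 and let a₁,…,aₙ be positive integers with Σ_{i=1}^n a_i = 2B for an integer B. Set x_i = 4^{n−i}·B, R_i = Σ_{k=1}^{i−1}(2x_k + a_k), τ = Σ_{k=1}^{n}(2x_k + a_k) and W = B + Σ_{i=1}^n x_i. Consider the mixed instance on a path with: for each i, a tight job with window [R_i, R_i + x_i] and processing time x_i, and a tight job with window [2τ − R_i − x_i, 2τ − R_i] and processing time x_i; for each i, a non-preemptive job with processing time x_i + a_i, release date R_i and deadline 2τ − R_i; and two preemptive jobs, each with processing time W, with windows [0, τ] and [τ, 2τ] respectively. Then there exists a feasible mixed schedule of this instance with busy time at most 2W if and only if there exists S ⊆ {1,…,n} with Σ_{i∈S} a_i = B. -/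

import Mathlib

open MeasureTheory Set

section

variable (n B : ℕ) (a : Fin n → ℕ)

/-- `x i = 4^{n−i} · B` (here `i : Fin n` is 0-indexed, so `x i = 4^{n−1−i} · B`). -/
def xval (i : Fin n) : ℝ := 4 ^ (n - 1 - (i : ℕ)) * B

/-- The release date `R_i = ∑_{k<i} (2 x_k + a_k)` of the `i`-th tight/non-preemptive job. -/
def Rval (i : Fin n) : ℝ := ∑ k ∈ Finset.Iio i, (2 * xval n B k + (a k : ℝ))

/-- The midpoint `τ = ∑_{k} (2 x_k + a_k)` of the time horizon. -/
def τval : ℝ := ∑ k : Fin n, (2 * xval n B k + (a k : ℝ))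

/-- The processing time `W = B + ∑_i x_i` of each of the two preemptive jobs. -/
def Wval : ℝ := (B : ℝ) + ∑ i : Fin n, xval n B i

end


section
variable (n B : ℕ) (a : Fin n → ℕ)

def tjL (i : Fin n) : Set ℝ := Set.Icc (Rval n B a i) (Rval n B a i + xval n B i)
def tjR (i : Fin n) : Set ℝ :=
  Set.Icc (2 * τval n B a - Rval n B a i - xval n B i) (2 * τval n B a - Rval n B a i)
def tset : Set ℝ := (⋃ i, tjL n B a i) ∪ (⋃ i, tjR n B a i)
def gapL (i : Fin n) : Set ℝ :=
  Set.Ioo (Rval n B a i + xval n B i) (Rval n B a i + 2 * xval n B i + (a i : ℝ))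
def gapR (i : Fin n) : Set ℝ :=
  Set.Ioo (2 * τval n B a - (Rval n B a i + 2 * xval n B i + (a i : ℝ)))
    (2 * τval n B a - Rval n B a i - xval n B i)
def Dset (s : Fin n → ℝ) (i : Fin n) : Set ℝ :=
  (Set.Icc (s i) (s i + (xval n B i + (a i : ℝ))) \ tset n B a) \ {τval n B a}

end

section A
variable {n B : ℕ} {a : Fin n → ℕ}

lemma B_le_xval (i : Fin n) : (B : ℝ) ≤ xval n B i := by
  unfold xval
  nlinarith [one_le_pow₀ (by norm_num : (1:ℝ) ≤ 4) (n := n - 1 - (i:ℕ)),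
    Nat.cast_nonneg (α := ℝ) B]

lemma xval_nonneg (i : Fin n) : 0 ≤ xval n B i :=
  le_trans (Nat.cast_nonneg B) (B_le_xval i)

lemma xval_pos (hB : 0 < B) (i : Fin n) : 0 < xval n B i :=
  lt_of_lt_of_le (by exact_mod_cast hB) (B_le_xval i)

lemma xval_last (i : Fin n) (h : (i : ℕ) = n - 1) : xval n B i = B := by
  unfold xval
  have : n - 1 - (i : ℕ) = 0 := by omega
  rw [this]; ring

lemma xval_big (i : Fin n) (h : (i : ℕ) ≠ n - 1) : 4 * B ≤ xval n B i := by
  unfold xval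
  have h1 : 1 ≤ n - 1 - (i : ℕ) := by have := i.isLt; omega
  have : (4:ℝ) ^ 1 ≤ 4 ^ (n - 1 - (i:ℕ)) :=
    pow_le_pow_right₀ (by norm_num) h1
  nlinarith [Nat.cast_nonneg (α := ℝ) B]

lemma tm_nonneg (i : Fin n) : 0 ≤ 2 * xval n B i + (a i : ℝ) := by
  have := xval_nonneg (B := B) i
  positivity

lemma Rval_nonneg (i : Fin n) : 0 ≤ Rval n B a i :=
  Finset.sum_nonneg fun k _ => tm_nonneg k

lemma Rval_add_le {i j : Fin n} (h : i < j) :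
    Rval n B a i + (2 * xval n B i + (a i : ℝ)) ≤ Rval n B a j := by
  have h1 : Finset.Iic i ⊆ Finset.Iio j := by
    intro k hk
    simp only [Finset.mem_Iic] at hk
    simp only [Finset.mem_Iio]
    exact lt_of_le_of_lt hk h
  have h2 : Rval n B a i + (2 * xval n B i + (a i : ℝ))
      = ∑ k ∈ Finset.Iic i, (2 * xval n B k + (a k : ℝ)) := by
    rw [← Finset.Iio_insert, Finset.sum_insert (by simp)]
    unfold Rval; ring
  rw [h2]
  exact Finset.sum_le_sum_of_subset_of_nonneg h1 fun k _ _ => tm_nonneg k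

lemma Rval_add_le_tau (i : Fin n) :
    Rval n B a i + (2 * xval n B i + (a i : ℝ)) ≤ τval n B a := by
  have h2 : Rval n B a i + (2 * xval n B i + (a i : ℝ))
      = ∑ k ∈ Finset.Iic i, (2 * xval n B k + (a k : ℝ)) := by
    rw [← Finset.Iio_insert, Finset.sum_insert (by simp)]
    unfold Rval; ring
  rw [h2]
  exact Finset.sum_le_sum_of_subset_of_nonneg (Finset.subset_univ _)
    fun k _ _ => tm_nonneg k

lemma tau_eq_last (i : Fin n) (h : (i : ℕ) = n - 1) :
    Rval n B a i + (2 * xval n B i + (a i : ℝ)) = τval n B a := by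
  have huniv : Finset.univ = Finset.Iic i := by
    ext k
    simp only [Finset.mem_univ, Finset.mem_Iic, true_iff, Fin.le_def]
    omega
  unfold τval
  rw [huniv, ← Finset.Iio_insert, Finset.sum_insert (by simp)]
  unfold Rval; ring

lemma sum_Ioi_xval (i : Fin n) :
    3 * ∑ k ∈ Finset.Ioi i, xval n B k = xval n B i - B := by
  have key : ∑ k ∈ Finset.Ioi i, ((4:ℝ) ^ (n - 1 - (k:ℕ)))
      = ∑ j ∈ Finset.range (n - 1 - (i:ℕ)), (4:ℝ) ^ j := by
    refine Finset.sum_nbij' (fun k => n - 1 - (k : ℕ))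
      (fun j => ⟨n - 1 - j, by have := i.isLt; omega⟩) ?_ ?_ ?_ ?_ ?_
    · intro k hk
      simp only [Finset.mem_Ioi, Fin.lt_def] at hk
      simp only [Finset.mem_range]
      have := k.isLt; omega
    · intro j hj
      simp only [Finset.mem_range] at hj
      simp only [Finset.mem_Ioi, Fin.lt_def]
      have := i.isLt; omega
    · intro k hk
      simp only [Finset.mem_Ioi, Fin.lt_def] at hk
      apply Fin.ext
      simp only
      have := k.isLt; omega
    · intro j hj
      simp only [Finset.mem_range] at hj
      simp only
      have := i.isLt; omega
    · intro k hk
      rfl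
  have geo : (3:ℝ) * ∑ j ∈ Finset.range (n - 1 - (i:ℕ)), (4:ℝ) ^ j
      = 4 ^ (n - 1 - (i:ℕ)) - 1 := by
    have := geom_sum_eq (by norm_num : (4:ℝ) ≠ 1) (n - 1 - (i:ℕ))
    rw [this]; ring
  unfold xval
  rw [Finset.mul_sum]
  calc ∑ k ∈ Finset.Ioi i, 3 * ((4:ℝ) ^ (n - 1 - (k:ℕ)) * B)
      = (3 * ∑ k ∈ Finset.Ioi i, ((4:ℝ) ^ (n - 1 - (k:ℕ)))) * B := by
        rw [Finset.mul_sum, Finset.sum_mul]; congr 1; ext k; ring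
    _ = ((4:ℝ) ^ (n - 1 - (i:ℕ)) - 1) * B := by rw [key, geo]
    _ = _ := by ring

lemma Ioi_last_empty (i : Fin n) (h : (i : ℕ) = n - 1) : Finset.Ioi i = ∅ := by
  ext k
  simp only [Finset.mem_Ioi, Finset.notMem_empty, iff_false, not_lt, Fin.le_def]
  omega

end A

section B
variable {n B : ℕ} {a : Fin n → ℕ}

lemma Icc_disj {a b c d : ℝ} (h : b < c) : Disjoint (Set.Icc a b) (Set.Icc c d) := by
  rw [Set.disjoint_left]
  rintro t ⟨_, h1⟩ ⟨h2, _⟩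
  linarith

lemma Ioo_disj {a b c d : ℝ} (h : b ≤ c) : Disjoint (Set.Ioo a b) (Set.Ioo c d) := by
  rw [Set.disjoint_left]
  rintro t ⟨_, h1⟩ ⟨h2, _⟩
  linarith

lemma tset_meas : MeasurableSet (tset n B a) :=
  ((MeasurableSet.iUnion fun _ => measurableSet_Icc).union
    (MeasurableSet.iUnion fun _ => measurableSet_Icc))

lemma Dset_meas (s : Fin n → ℝ) (i : Fin n) : MeasurableSet (Dset n B a s i) :=
  ((measurableSet_Icc.diff tset_meas).diff (measurableSet_singleton _))

lemma vol_tjL (i : Fin n) : volume (tjL n B a i) = ENNReal.ofReal (xval n B i) := by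
  unfold tjL
  rw [Real.volume_Icc]
  congr 1
  ring

lemma vol_tjR (i : Fin n) : volume (tjR n B a i) = ENNReal.ofReal (xval n B i) := by
  unfold tjR
  rw [Real.volume_Icc]
  congr 1
  ring

end B
section C
variable {n B : ℕ} {a : Fin n → ℕ}

lemma Rx_lt_R (hB : 0 < B) (ha : ∀ i, 0 < a i) {i j : Fin n} (h : i < j) :
    Rval n B a i + xval n B i < Rval n B a j := by
  have h1 := Rval_add_le (a := a) (B := B) h
  have h2 := xval_pos (n := n) hB i
  have h3 : (1:ℝ) ≤ (a i : ℝ) := by exact_mod_cast ha i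
  linarith

lemma Rx_lt_tau (hB : 0 < B) (ha : ∀ i, 0 < a i) (i : Fin n) :
    Rval n B a i + xval n B i < τval n B a := by
  have h1 := Rval_add_le_tau (a := a) (B := B) i
  have h2 := xval_pos (n := n) hB i
  have h3 : (1:ℝ) ≤ (a i : ℝ) := by exact_mod_cast ha i
  linarith

lemma tjL_pairwise (hB : 0 < B) (ha : ∀ i, 0 < a i) :
    Pairwise (Function.onFun Disjoint fun i => tjL n B a i) := by
  intro i j hij
  rcases lt_or_gt_of_ne hij with h | h
  · exact Icc_disj (Rx_lt_R hB ha h)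
  · exact (Icc_disj (Rx_lt_R hB ha h)).symm

lemma tjR_pairwise (hB : 0 < B) (ha : ∀ i, 0 < a i) :
    Pairwise (Function.onFun Disjoint fun i => tjR n B a i) := by
  intro i j hij
  rcases lt_or_gt_of_ne hij with h | h
  · refine (Icc_disj ?_).symm
    have := Rx_lt_R (a := a) hB ha h
    linarith
  · refine Icc_disj ?_
    have := Rx_lt_R (a := a) hB ha h
    linarith

lemma vol_tjL_union (hB : 0 < B) (ha : ∀ i, 0 < a i) :
    volume (⋃ i, tjL n B a i) = ENNReal.ofReal (∑ k, xval n B k) := by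
  rw [measure_iUnion (tjL_pairwise hB ha) fun i => measurableSet_Icc, tsum_fintype]
  rw [ENNReal.ofReal_sum_of_nonneg fun i _ => xval_nonneg i]
  exact Finset.sum_congr rfl fun i _ => vol_tjL i

lemma vol_tjR_union (hB : 0 < B) (ha : ∀ i, 0 < a i) :
    volume (⋃ i, tjR n B a i) = ENNReal.ofReal (∑ k, xval n B k) := by
  rw [measure_iUnion (tjR_pairwise hB ha) fun i => measurableSet_Icc, tsum_fintype]
  rw [ENNReal.ofReal_sum_of_nonneg fun i _ => xval_nonneg i]
  exact Finset.sum_congr rfl fun i _ => vol_tjR i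

lemma gapL_pairwise (hB : 0 < B) (ha : ∀ i, 0 < a i) :
    Pairwise (Function.onFun Disjoint fun i => gapL n B a i) := by
  have key : ∀ i j : Fin n, i < j → Disjoint (gapL n B a i) (gapL n B a j) := by
    intro i j h
    refine Ioo_disj ?_
    have h1 := Rval_add_le (a := a) (B := B) h
    have h2 := xval_nonneg (B := B) (n := n) j
    linarith
  intro i j hij
  rcases lt_or_gt_of_ne hij with h | h
  · exact key i j h
  · exact (key j i h).symm

lemma gapR_pairwise (hB : 0 < B) (ha : ∀ i, 0 < a i) :
    Pairwise (Function.onFun Disjoint fun i => gapR n B a i) := by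
  have key : ∀ i j : Fin n, i < j → Disjoint (gapR n B a j) (gapR n B a i) := by
    intro i j h
    refine Ioo_disj ?_
    have h1 := Rval_add_le (a := a) (B := B) h
    have h2 := xval_nonneg (B := B) (n := n) j
    linarith
  intro i j hij
  rcases lt_or_gt_of_ne hij with h | h
  · exact (key i j h).symm
  · exact key j i h

lemma gapL_subset_Iio (i : Fin n) : gapL n B a i ⊆ Set.Iio (τval n B a) := by
  rintro t ⟨_, h2⟩
  have := Rval_add_le_tau (B := B) (a := a) i
  simp only [Set.mem_Iio]
  linarith

lemma gapR_subset_Ioi (i : Fin n) : gapR n B a i ⊆ Set.Ioi (τval n B a) := by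
  rintro t ⟨h1, _⟩
  have := Rval_add_le_tau (B := B) (a := a) i
  simp only [Set.mem_Ioi]
  linarith

end C

section Key
variable {n B : ℕ} {a : Fin n → ℕ}

lemma key_lemma (hB : 0 < B) (ha : ∀ i, 0 < a i)
    (s : Fin n → ℝ) (i : Fin n)
    (hw1 : Rval n B a i ≤ s i)
    (hw2 : s i + (xval n B i + (a i : ℝ)) ≤ 2 * τval n B a - Rval n B a i)
    (h2B : (volume (Dset n B a s i)).toReal ≤ 2 * B) :
    ((a i : ℝ) ≤ (volume (Dset n B a s i)).toReal) ∧
    (Dset n B a s i ⊆ gapL n B a i ∪ gapR n B a i) ∧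
    (s i < Rval n B a i + xval n B i → Dset n B a s i ⊆ gapL n B a i) ∧
    (Rval n B a i + xval n B i ≤ s i →
      (2 * τval n B a - Rval n B a i - xval n B i < s i + (xval n B i + (a i : ℝ)) →
        Dset n B a s i ⊆ gapR n B a i) ∧
      (s i + (xval n B i + (a i : ℝ)) ≤ 2 * τval n B a - Rval n B a i - xval n B i →
        (B : ℝ) + (a i : ℝ) ≤ (volume (Dset n B a s i)).toReal)) := by
  have hBr : (1:ℝ) ≤ (B:ℝ) := by exact_mod_cast hB
  have hαk : ∀ k : Fin n, (1:ℝ) ≤ (a k : ℝ) := fun k => by exact_mod_cast ha k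
  have hxk : ∀ k : Fin n, (B:ℝ) ≤ xval n B k := fun k => B_le_xval k
  have hxp : ∀ k : Fin n, (0:ℝ) < xval n B k := fun k => xval_pos hB k
  have hRt : ∀ k : Fin n, Rval n B a k + (2 * xval n B k + (a k:ℝ)) ≤ τval n B a :=
    fun k => Rval_add_le_tau k
  have hRlt : ∀ k l : Fin n, k < l →
      Rval n B a k + (2 * xval n B k + (a k:ℝ)) ≤ Rval n B a l :=
    fun k l h => Rval_add_le (B := B) (a := a) h
  have hDsubJ : Dset n B a s i ⊆ Set.Icc (s i) (s i + (xval n B i + (a i:ℝ))) :=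
    fun t ht => ht.1.1
  have hDfin : volume (Dset n B a s i) ≠ ⊤ := by
    refine ne_top_of_le_ne_top ?_ (measure_mono hDsubJ)
    rw [Real.volume_Icc]
    exact ENNReal.ofReal_ne_top
  have htoReal : ∀ c : ℝ, 0 ≤ c → ENNReal.ofReal c ≤ volume (Dset n B a s i) →
      c ≤ (volume (Dset n B a s i)).toReal := by
    intro c hc h
    have := ENNReal.toReal_mono hDfin h
    rwa [ENNReal.toReal_ofReal hc] at this
  have htset_elim : ∀ t : ℝ, t ∈ tset n B a →
      (∃ k, Rval n B a k ≤ t ∧ t ≤ Rval n B a k + xval n B k) ∨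
      (∃ k, 2*τval n B a - Rval n B a k - xval n B k ≤ t ∧ t ≤ 2*τval n B a - Rval n B a k) := by
    intro t ht
    rcases ht with ht | ht
    · rcases Set.mem_iUnion.1 ht with ⟨k, hk⟩
      exact Or.inl ⟨k, hk.1, hk.2⟩
    · rcases Set.mem_iUnion.1 ht with ⟨k, hk⟩
      exact Or.inr ⟨k, hk.1, hk.2⟩
  have htjL_mem : ∀ (k : Fin n) (t : ℝ), Rval n B a k ≤ t →
      t ≤ Rval n B a k + xval n B k → t ∈ tset n B a :=
    fun k t h1 h2 => Or.inl (Set.mem_iUnion.2 ⟨k, h1, h2⟩)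
  have htjR_mem : ∀ (k : Fin n) (t : ℝ), 2*τval n B a - Rval n B a k - xval n B k ≤ t →
      t ≤ 2*τval n B a - Rval n B a k → t ∈ tset n B a :=
    fun k t h1 h2 => Or.inr (Set.mem_iUnion.2 ⟨k, h1, h2⟩)
  rcases lt_or_ge (s i) (Rval n B a i + xval n B i) with hsl | hsr
  · -- left-canonical case
    have hJT : ∀ t : ℝ, s i ≤ t → t ≤ s i + (xval n B i + (a i:ℝ)) → t ∈ tset n B a →
        t ≤ Rval n B a i + xval n B i := by
      intro t ht1 ht2 htT
      rcases htset_elim t htT with ⟨k, hk1, hk2⟩ | ⟨k, hk1, hk2⟩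
      · rcases lt_trichotomy k i with hki | hki | hki
        · exfalso
          have h1 := hRlt k i hki
          have h2 := hxp k
          have h3 := hαk k
          linarith
        · subst hki; exact hk2
        · exfalso
          have h1 := hRlt i k hki
          linarith
      · exfalso
        have h5 := hRt k
        have h2 := hxp k
        have h3 := hαk k
        have h6 := hRt i
        linarith
    have hDGL : Dset n B a s i ⊆ gapL n B a i := by
      rintro t ⟨⟨⟨ht1, ht2⟩, htT⟩, _⟩
      constructor
      · by_contra hcon
        push_neg at hcon
        exact htT (htjL_mem i t (by linarith) hcon)
      · have := hxp i
        linarith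
    have hvola : (a i : ℝ) ≤ (volume (Dset n B a s i)).toReal := by
      apply htoReal _ (by linarith [hαk i])
      have hsub2 : Set.Ioc (Rval n B a i + xval n B i) (s i + (xval n B i + (a i:ℝ)))
          \ {τval n B a} ⊆ Dset n B a s i := by
        rintro t ⟨⟨ht1, ht2⟩, htτ⟩
        refine ⟨⟨⟨by linarith, ht2⟩, fun htT => ?_⟩, htτ⟩
        have := hJT t (by linarith) ht2 htT
        linarith
      calc ENNReal.ofReal ((a i:ℝ))
          ≤ ENNReal.ofReal ((s i + (xval n B i + (a i:ℝ))) - (Rval n B a i + xval n B i)) := by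
            apply ENNReal.ofReal_le_ofReal; linarith
        _ = volume (Set.Ioc (Rval n B a i + xval n B i) (s i + (xval n B i + (a i:ℝ)))
              \ {τval n B a}) := by
            rw [measure_diff_null Real.volume_singleton, Real.volume_Ioc]
        _ ≤ volume (Dset n B a s i) := measure_mono hsub2
    exact ⟨hvola, fun t ht => Or.inl (hDGL ht), fun _ => hDGL,
      fun h => absurd hsl (not_lt.2 h)⟩
  · rcases lt_or_ge (2 * τval n B a - Rval n B a i - xval n B i)
        (s i + (xval n B i + (a i:ℝ))) with her | hel
    · -- right-canonical case
      have hτi := hRt i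
      have hslow : 2 * τval n B a - (Rval n B a i + 2*xval n B i + (a i:ℝ)) < s i := by
        linarith
      have hJT : ∀ t : ℝ, s i ≤ t → t ≤ s i + (xval n B i + (a i:ℝ)) → t ∈ tset n B a →
          2 * τval n B a - Rval n B a i - xval n B i ≤ t := by
        intro t ht1 ht2 htT
        rcases htset_elim t htT with ⟨k, hk1, hk2⟩ | ⟨k, hk1, hk2⟩
        · exfalso
          have h5 := hRt k
          have h2 := hxp k
          have h3 := hαk k
          linarith
        · rcases lt_trichotomy k i with hki | hki | hki
          · exfalso
            have h1 := hRlt k i hki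
            have h2 := hxp k
            have h3 := hαk k
            linarith
          · subst hki; exact hk1
          · exfalso
            have h1 := hRlt i k hki
            linarith
      have hDGR : Dset n B a s i ⊆ gapR n B a i := by
        rintro t ⟨⟨⟨ht1, ht2⟩, htT⟩, _⟩
        constructor
        · linarith
        · by_contra hcon
          push_neg at hcon
          exact htT (htjR_mem i t hcon (by linarith))
      have hvola : (a i : ℝ) ≤ (volume (Dset n B a s i)).toReal := by
        apply htoReal _ (by linarith [hαk i])
        have hsub2 : Set.Ico (s i) (2 * τval n B a - Rval n B a i - xval n B i)
            \ {τval n B a} ⊆ Dset n B a s i := by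
          rintro t ⟨⟨ht1, ht2⟩, htτ⟩
          refine ⟨⟨⟨ht1, by linarith⟩, fun htT => ?_⟩, htτ⟩
          have := hJT t ht1 (by linarith) htT
          linarith
        calc ENNReal.ofReal ((a i:ℝ))
            ≤ ENNReal.ofReal ((2 * τval n B a - Rval n B a i - xval n B i) - s i) := by
              apply ENNReal.ofReal_le_ofReal; linarith
          _ = volume (Set.Ico (s i) (2 * τval n B a - Rval n B a i - xval n B i)
                \ {τval n B a}) := by
              rw [measure_diff_null Real.volume_singleton, Real.volume_Ico]
          _ ≤ volume (Dset n B a s i) := measure_mono hsub2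
      exact ⟨hvola, fun t ht => Or.inr (hDGR ht), fun h => absurd h (not_lt.2 hsr),
        fun _ => ⟨fun _ => hDGR, fun h' => absurd her (not_lt.2 h')⟩⟩
    · -- middle case
      have hτi := hRt i
      have hsubE : Set.Icc (s i) (s i + (xval n B i + (a i:ℝ))) ∩ (tset n B a ∪ {τval n B a})
          ⊆ (⋃ k ∈ Finset.Ioi i, (tjL n B a k ∪ tjR n B a k)) ∪
            ({Rval n B a i + xval n B i} ∪
              ({2*τval n B a - Rval n B a i - xval n B i} ∪ {τval n B a})) := by
        rintro t ⟨⟨ht1, ht2⟩, htT⟩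
        rcases htT with htT | htτ
        swap
        · exact Or.inr (Or.inr (Or.inr htτ))
        rcases htset_elim t htT with ⟨k, hk1, hk2⟩ | ⟨k, hk1, hk2⟩
        · rcases lt_trichotomy k i with hki | hki | hki
          · exfalso
            have h1 := hRlt k i hki
            have h2 := hxp k
            have h3 := hαk k
            have h4 := hxp i
            linarith
          · rw [hki] at hk1 hk2
            have ht : t = Rval n B a i + xval n B i := le_antisymm hk2 (le_trans hsr ht1)
            exact Or.inr (Or.inl ht)
          · exact Or.inl (Set.mem_biUnion (Finset.mem_Ioi.2 hki) (Or.inl ⟨hk1, hk2⟩))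
        · rcases lt_trichotomy k i with hki | hki | hki
          · exfalso
            have h1 := hRlt k i hki
            have h2 := hxp k
            have h3 := hαk k
            have h4 := hxp i
            linarith
          · rw [hki] at hk1 hk2
            have ht : t = 2*τval n B a - Rval n B a i - xval n B i :=
              le_antisymm (le_trans ht2 hel) hk1
            exact Or.inr (Or.inr (Or.inl ht))
          · exact Or.inl (Set.mem_biUnion (Finset.mem_Ioi.2 hki) (Or.inr ⟨hk1, hk2⟩))
      have hS0 : (0:ℝ) ≤ ∑ k ∈ Finset.Ioi i, xval n B k :=
        Finset.sum_nonneg fun k _ => xval_nonneg k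
      have hvolE : volume ((⋃ k ∈ Finset.Ioi i, (tjL n B a k ∪ tjR n B a k)) ∪
            ({Rval n B a i + xval n B i} ∪
              ({2*τval n B a - Rval n B a i - xval n B i} ∪ {τval n B a}) : Set ℝ))
          ≤ ENNReal.ofReal (2 * ∑ k ∈ Finset.Ioi i, xval n B k) := by
        refine le_trans (measure_union_le _ _) ?_
        have hpts : volume (({Rval n B a i + xval n B i} ∪
            ({2*τval n B a - Rval n B a i - xval n B i} ∪ {τval n B a})) : Set ℝ) = 0 :=
          measure_union_null Real.volume_singleton
            (measure_union_null Real.volume_singleton Real.volume_singleton)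
        rw [hpts, add_zero]
        refine le_trans (measure_biUnion_finset_le _ _) ?_
        have step : ∀ k ∈ Finset.Ioi i,
            volume (tjL n B a k ∪ tjR n B a k) ≤ ENNReal.ofReal (2 * xval n B k) := by
          intro k _
          refine le_trans (measure_union_le _ _) ?_
          rw [vol_tjL, vol_tjR, ← ENNReal.ofReal_add (xval_nonneg k) (xval_nonneg k)]
          apply ENNReal.ofReal_le_ofReal
          linarith [xval_nonneg (B := B) (n := n) k]
        refine le_trans (Finset.sum_le_sum step) ?_
        rw [← ENNReal.ofReal_sum_of_nonneg (fun k _ => by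
          linarith [xval_nonneg (B := B) (n := n) k] : ∀ k ∈ Finset.Ioi i, (0:ℝ) ≤ 2 * xval n B k)]
        apply ENNReal.ofReal_le_ofReal
        rw [Finset.mul_sum]
      have hDeq : Dset n B a s i =
          Set.Icc (s i) (s i + (xval n B i + (a i:ℝ))) \ (tset n B a ∪ {τval n B a}) := by
        unfold Dset
        rw [Set.diff_diff]
      have hmeasY : MeasurableSet (tset n B a ∪ {τval n B a}) :=
        tset_meas.union (measurableSet_singleton _)
      have hkey := measure_inter_add_diff (μ := volume)
        (Set.Icc (s i) (s i + (xval n B i + (a i:ℝ)))) hmeasY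
      rw [← hDeq, Real.volume_Icc] at hkey
      have hfinJ : ENNReal.ofReal (s i + (xval n B i + (a i:ℝ)) - s i) ≠ ⊤ :=
        ENNReal.ofReal_ne_top
      have hfin1 : volume (Set.Icc (s i) (s i + (xval n B i + (a i:ℝ)))
          ∩ (tset n B a ∪ {τval n B a})) ≠ ⊤ := by
        refine ne_top_of_le_ne_top hfinJ ?_
        rw [← Real.volume_Icc]
        exact measure_mono Set.inter_subset_left
      have e1 : (volume (Set.Icc (s i) (s i + (xval n B i + (a i:ℝ)))
            ∩ (tset n B a ∪ {τval n B a}))).toReal + (volume (Dset n B a s i)).toReal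
          = s i + (xval n B i + (a i:ℝ)) - s i := by
        have := congrArg ENNReal.toReal hkey
        rwa [ENNReal.toReal_add hfin1 hDfin, ENNReal.toReal_ofReal (by linarith [hxp i, hαk i])]
          at this
      have hc : (volume (Set.Icc (s i) (s i + (xval n B i + (a i:ℝ)))
            ∩ (tset n B a ∪ {τval n B a}))).toReal
          ≤ 2 * ∑ k ∈ Finset.Ioi i, xval n B k := by
        have := ENNReal.toReal_mono ENNReal.ofReal_ne_top
          (le_trans (measure_mono hsubE) hvolE)
        rwa [ENNReal.toReal_ofReal (by linarith)] at this
      by_cases hlast : (i : ℕ) = n - 1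
      · have hSe : ∑ k ∈ Finset.Ioi i, xval n B k = 0 := by
          rw [Ioi_last_empty i hlast, Finset.sum_empty]
        have hxB : xval n B i = B := xval_last i hlast
        have hc0 : (0:ℝ) ≤ (volume (Set.Icc (s i) (s i + (xval n B i + (a i:ℝ)))
            ∩ (tset n B a ∪ {τval n B a}))).toReal := ENNReal.toReal_nonneg
        have hdB : (B:ℝ) + (a i:ℝ) ≤ (volume (Dset n B a s i)).toReal := by
          rw [hSe] at hc
          linarith
        have hτeq := tau_eq_last (B := B) (a := a) i hlast
        have hDsub : Dset n B a s i ⊆ gapL n B a i ∪ gapR n B a i := by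
          rintro t ⟨⟨⟨ht1, ht2⟩, htT⟩, htτ⟩
          have hlow : Rval n B a i + xval n B i < t := by
            by_contra hcon
            push_neg at hcon
            exact htT (htjL_mem i t (by linarith) hcon)
          have hhigh : t < 2*τval n B a - Rval n B a i - xval n B i := by
            by_contra hcon
            push_neg at hcon
            exact htT (htjR_mem i t hcon (by linarith))
          rcases lt_or_gt_of_ne htτ with h | h
          · exact Or.inl ⟨hlow, by linarith⟩
          · exact Or.inr ⟨by linarith, hhigh⟩
        exact ⟨by linarith, hDsub, fun h => absurd h (not_lt.2 hsr),
          fun _ => ⟨fun h' => absurd h' (not_lt.2 hel), fun _ => hdB⟩⟩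
      · exfalso
        have h3S := sum_Ioi_xval (B := B) i
        have hxbig := xval_big (B := B) i hlast
        have hai := hαk i
        linarith
end Key


/-- **Theorem 8 (weak NP-hardness of mixed scheduling on a path, reduction from PARTITION).**
The constructed mixed instance — for each `i` two tight jobs with windows `[R_i, R_i + x_i]`
and `[2τ − R_i − x_i, 2τ − R_i]` and processing time `x_i`, a non-preemptive job with window
`[R_i, 2τ − R_i]` and processing time `x_i + a_i`, and two preemptive jobs of processing time
`W` with windows `[0, τ]` and `[τ, 2τ]` — admits a feasible mixed schedule of busy time at
most `2W` if and only if the numbers `a_1, …, a_n` (with `∑ a_i = 2B`) admit a partition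
`S` with `∑_{i ∈ S} a_i = B`. -/
theorem mixed_scheduling_partition (n B : ℕ) (hn : 2 ≤ n) (a : Fin n → ℕ)
    (ha : ∀ i, 0 < a i) (hsum : ∑ i, a i = 2 * B) :
    (∃ (s : Fin n → ℝ) (S1 S2 : Set ℝ),
      -- the non-preemptive jobs are scheduled within their windows
      (∀ i, Rval n B a i ≤ s i ∧
        s i + (xval n B i + (a i : ℝ)) ≤ 2 * τval n B a - Rval n B a i) ∧
      -- the two preemptive jobs
      MeasurableSet S1 ∧ S1 ⊆ Set.Icc 0 (τval n B a) ∧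
        volume S1 = ENNReal.ofReal (Wval n B) ∧
      MeasurableSet S2 ∧ S2 ⊆ Set.Icc (τval n B a) (2 * τval n B a) ∧
        volume S2 = ENNReal.ofReal (Wval n B) ∧
      -- the busy time (the tight jobs are forced to fill their whole windows)
      volume ((⋃ i, Set.Icc (Rval n B a i) (Rval n B a i + xval n B i)) ∪
              (⋃ i, Set.Icc (2 * τval n B a - Rval n B a i - xval n B i)
                    (2 * τval n B a - Rval n B a i)) ∪
              (⋃ i, Set.Icc (s i) (s i + (xval n B i + (a i : ℝ)))) ∪
              S1 ∪ S2) ≤ ENNReal.ofReal (2 * Wval n B)) ↔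
    (∃ S : Finset (Fin n), ∑ i ∈ S, a i = B) := by

  classical
  have hB : 0 < B := by
    have h1 : n ≤ ∑ i : Fin n, a i := by
      calc n = ∑ _i : Fin n, 1 := by simp
        _ ≤ ∑ i, a i := Finset.sum_le_sum fun i _ => ha i
    omega
  have hBr : (1:ℝ) ≤ (B:ℝ) := by exact_mod_cast hB
  have hαk : ∀ k : Fin n, (1:ℝ) ≤ (a k : ℝ) := fun k => by exact_mod_cast ha k
  have hxk : ∀ k : Fin n, (B:ℝ) ≤ xval n B k := fun k => B_le_xval k
  have hxp : ∀ k : Fin n, (0:ℝ) < xval n B k := fun k => xval_pos hB k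
  have hRt : ∀ k : Fin n, Rval n B a k + (2 * xval n B k + (a k:ℝ)) ≤ τval n B a :=
    fun k => Rval_add_le_tau k
  have hRlt : ∀ k l : Fin n, k < l →
      Rval n B a k + (2 * xval n B k + (a k:ℝ)) ≤ Rval n B a l :=
    fun k l h => Rval_add_le (B := B) (a := a) h
  have hR0 : ∀ k : Fin n, 0 ≤ Rval n B a k := fun k => Rval_nonneg k
  have hsx0 : (0:ℝ) ≤ ∑ k, xval n B k := Finset.sum_nonneg fun k _ => xval_nonneg k
  have hWeq : Wval n B = (B:ℝ) + ∑ k, xval n B k := rfl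
  have hWnn : 0 ≤ Wval n B := by rw [hWeq]; positivity
  have hsumR : ∑ k, ((a k : ℝ)) = 2 * (B:ℝ) := by
    rw [← Nat.cast_sum, hsum]
    push_cast
    ring
  constructor
  · -- hard direction
    rintro ⟨s, S1, S2, hwin, hS1m, hS1sub, hS1vol, hS2m, hS2sub, hS2vol, hvol⟩
    set U : Set ℝ := (⋃ i, tjL n B a i) ∪ (⋃ i, tjR n B a i) ∪
      (⋃ i, Set.Icc (s i) (s i + (xval n B i + (a i:ℝ)))) ∪ S1 ∪ S2 with hUdef
    have hvolU : volume U ≤ ENNReal.ofReal (2 * Wval n B) := hvol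
    have hJU : ∀ i, Set.Icc (s i) (s i + (xval n B i + (a i:ℝ))) ⊆ U :=
      fun i t ht => Or.inl (Or.inl (Or.inr (Set.mem_iUnion.2 ⟨i, ht⟩)))
    have htsetU : tset n B a ⊆ U := fun t ht => Or.inl (Or.inl (Or.inl ht))
    have hUfin : volume U ≠ ⊤ := ne_top_of_le_ne_top ENNReal.ofReal_ne_top hvolU
    have hfin : ∀ {A : Set ℝ}, A ⊆ U → volume A ≠ ⊤ :=
      fun h => ne_top_of_le_ne_top hUfin (measure_mono h)
    have hUr : (volume U).toReal ≤ 2 * Wval n B := by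
      have := ENNReal.toReal_mono ENNReal.ofReal_ne_top hvolU
      rwa [ENNReal.toReal_ofReal (by linarith)] at this
    -- total free budget
    have hTdisj : Disjoint (⋃ i, tjL n B a i) (⋃ i, tjR n B a i) := by
      rw [Set.disjoint_left]
      intro t ht ht'
      rcases Set.mem_iUnion.1 ht with ⟨k, hk⟩
      rcases Set.mem_iUnion.1 ht' with ⟨l, hl⟩
      have h1 := Rx_lt_tau hB ha k
      have h2 := Rx_lt_tau hB ha l
      have hk2 : t ≤ Rval n B a k + xval n B k := hk.2
      have hl1 : 2 * τval n B a - Rval n B a l - xval n B l ≤ t := hl.1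
      linarith
    have hvolT : volume (tset n B a)
        = ENNReal.ofReal (∑ k, xval n B k) + ENNReal.ofReal (∑ k, xval n B k) := by
      show volume ((⋃ i, tjL n B a i) ∪ (⋃ i, tjR n B a i)) = _
      rw [measure_union hTdisj (MeasurableSet.iUnion fun _ => measurableSet_Icc),
        vol_tjL_union hB ha, vol_tjR_union hB ha]
    have hsplitT := measure_inter_add_diff (μ := volume) U (tset_meas (n := n) (B := B) (a := a))
    rw [Set.inter_eq_right.2 htsetU, hvolT] at hsplitT
    have hfinUT : volume (U \ tset n B a) ≠ ⊤ := hfin Set.diff_subset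
    have h2Bs : (volume (U \ tset n B a)).toReal ≤ 2 * B := by
      have h5 := congrArg ENNReal.toReal hsplitT
      rw [ENNReal.toReal_add (ENNReal.add_ne_top.2 ⟨ENNReal.ofReal_ne_top, ENNReal.ofReal_ne_top⟩)
          hfinUT,
        ENNReal.toReal_add ENNReal.ofReal_ne_top ENNReal.ofReal_ne_top,
        ENNReal.toReal_ofReal hsx0] at h5
      rw [hWeq] at hUr
      linarith
    have h2B : ∀ i, (volume (Dset n B a s i)).toReal ≤ 2 * B := by
      intro i
      have hsub : Dset n B a s i ⊆ U \ tset n B a := fun t ht => ⟨hJU i ht.1.1, ht.1.2⟩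
      exact le_trans (ENNReal.toReal_mono hfinUT (measure_mono hsub)) h2Bs
    have hkey := fun i => key_lemma hB ha s i (hwin i).1 (hwin i).2 (h2B i)
    have hDmeas : ∀ i, MeasurableSet (Dset n B a s i) := fun i => Dset_meas s i
    have hDLsub : ∀ i, Dset n B a s i ∩ Set.Iio (τval n B a) ⊆ gapL n B a i := by
      intro i t ht
      rcases (hkey i).2.1 ht.1 with h | h
      · exact h
      · exfalso
        have h5 := gapR_subset_Ioi (B := B) i h
        simp only [Set.mem_Ioi] at h5
        have h6 := ht.2
        simp only [Set.mem_Iio] at h6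
        linarith
    have hDRsub : ∀ i, Dset n B a s i ∩ Set.Ioi (τval n B a) ⊆ gapR n B a i := by
      intro i t ht
      rcases (hkey i).2.1 ht.1 with h | h
      · exfalso
        have h5 := gapL_subset_Iio (B := B) i h
        simp only [Set.mem_Iio] at h5
        have h6 := ht.2
        simp only [Set.mem_Ioi] at h6
        linarith
      · exact h
    have hfinDL : ∀ i, volume (Dset n B a s i ∩ Set.Iio (τval n B a)) ≠ ⊤ :=
      fun i => hfin fun t ht => hJU i ht.1.1.1
    have hfinDR : ∀ i, volume (Dset n B a s i ∩ Set.Ioi (τval n B a)) ≠ ⊤ :=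
      fun i => hfin fun t ht => hJU i ht.1.1.1
    -- left half lower bound
    have hleft : ENNReal.ofReal (∑ k, xval n B k)
        + ∑ i, volume (Dset n B a s i ∩ Set.Iio (τval n B a))
        ≤ volume (U ∩ Set.Iic (τval n B a)) := by
      have hdisj2 : Pairwise (Function.onFun Disjoint fun i => Dset n B a s i ∩ Set.Iio (τval n B a)) :=
        fun i j hij => Disjoint.mono (hDLsub i) (hDLsub j) (gapL_pairwise hB ha hij)
      have hvol2 : volume (⋃ i, (Dset n B a s i ∩ Set.Iio (τval n B a)))
          = ∑ i, volume (Dset n B a s i ∩ Set.Iio (τval n B a)) := by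
        rw [measure_iUnion hdisj2 (fun i => (hDmeas i).inter measurableSet_Iio), tsum_fintype]
      have hdisjTL : Disjoint (⋃ i, tjL n B a i)
          (⋃ i, (Dset n B a s i ∩ Set.Iio (τval n B a))) := by
        rw [Set.disjoint_left]
        intro t ht htD
        rcases Set.mem_iUnion.1 htD with ⟨k, hk⟩
        exact hk.1.1.2 (Or.inl ht)
      have hsubU : (⋃ i, tjL n B a i) ∪ (⋃ i, (Dset n B a s i ∩ Set.Iio (τval n B a)))
          ⊆ U ∩ Set.Iic (τval n B a) := by
        rintro t (ht | ht)
        · rcases Set.mem_iUnion.1 ht with ⟨k, hk⟩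
          refine ⟨htsetU (Or.inl ht), ?_⟩
          have h5 := Rx_lt_tau hB ha k
          have hk2 : t ≤ Rval n B a k + xval n B k := hk.2
          simp only [Set.mem_Iic]
          linarith
        · rcases Set.mem_iUnion.1 ht with ⟨k, hk⟩
          exact ⟨hJU k hk.1.1.1, Set.mem_Iic.2 (le_of_lt (Set.mem_Iio.1 hk.2))⟩
      calc ENNReal.ofReal (∑ k, xval n B k)
            + ∑ i, volume (Dset n B a s i ∩ Set.Iio (τval n B a))
          = volume ((⋃ i, tjL n B a i) ∪ ⋃ i, (Dset n B a s i ∩ Set.Iio (τval n B a))) := by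
            rw [measure_union hdisjTL
                (MeasurableSet.iUnion fun i => (hDmeas i).inter measurableSet_Iio),
              vol_tjL_union hB ha, hvol2]
        _ ≤ volume (U ∩ Set.Iic (τval n B a)) := measure_mono hsubU
    -- right half lower bound
    have hright : ENNReal.ofReal (∑ k, xval n B k)
        + ∑ i, volume (Dset n B a s i ∩ Set.Ioi (τval n B a))
        ≤ volume (U ∩ Set.Ioi (τval n B a)) := by
      have hdisj2 : Pairwise (Function.onFun Disjoint fun i => Dset n B a s i ∩ Set.Ioi (τval n B a)) :=
        fun i j hij => Disjoint.mono (hDRsub i) (hDRsub j) (gapR_pairwise hB ha hij)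
      have hvol2 : volume (⋃ i, (Dset n B a s i ∩ Set.Ioi (τval n B a)))
          = ∑ i, volume (Dset n B a s i ∩ Set.Ioi (τval n B a)) := by
        rw [measure_iUnion hdisj2 (fun i => (hDmeas i).inter measurableSet_Ioi), tsum_fintype]
      have hdisjTR : Disjoint (⋃ i, tjR n B a i)
          (⋃ i, (Dset n B a s i ∩ Set.Ioi (τval n B a))) := by
        rw [Set.disjoint_left]
        intro t ht htD
        rcases Set.mem_iUnion.1 htD with ⟨k, hk⟩
        exact hk.1.1.2 (Or.inr ht)
      have hsubU : (⋃ i, tjR n B a i) ∪ (⋃ i, (Dset n B a s i ∩ Set.Ioi (τval n B a)))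
          ⊆ U ∩ Set.Ioi (τval n B a) := by
        rintro t (ht | ht)
        · rcases Set.mem_iUnion.1 ht with ⟨k, hk⟩
          refine ⟨htsetU (Or.inr ht), ?_⟩
          have h5 := Rx_lt_tau hB ha k
          have hk1 : 2 * τval n B a - Rval n B a k - xval n B k ≤ t := hk.1
          simp only [Set.mem_Ioi]
          linarith
        · rcases Set.mem_iUnion.1 ht with ⟨k, hk⟩
          exact ⟨hJU k hk.1.1.1, hk.2⟩
      calc ENNReal.ofReal (∑ k, xval n B k)
            + ∑ i, volume (Dset n B a s i ∩ Set.Ioi (τval n B a))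
          = volume ((⋃ i, tjR n B a i) ∪ ⋃ i, (Dset n B a s i ∩ Set.Ioi (τval n B a))) := by
            rw [measure_union hdisjTR
                (MeasurableSet.iUnion fun i => (hDmeas i).inter measurableSet_Ioi),
              vol_tjR_union hB ha, hvol2]
        _ ≤ volume (U ∩ Set.Ioi (τval n B a)) := measure_mono hsubU
    -- preemptive lower bounds
    have hWL : ENNReal.ofReal (Wval n B) ≤ volume (U ∩ Set.Iic (τval n B a)) := by
      rw [← hS1vol]
      exact measure_mono fun t ht => ⟨Or.inl (Or.inr ht), (hS1sub ht).2⟩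
    have hWR : ENNReal.ofReal (Wval n B) ≤ volume (U ∩ Set.Ioi (τval n B a)) := by
      have h1 := measure_inter_add_diff (μ := volume) S2 (measurableSet_Ioi (a := τval n B a))
      have h2 : S2 \ Set.Ioi (τval n B a) ⊆ {τval n B a} := by
        rintro t ⟨ht, hnt⟩
        simp only [Set.mem_Ioi, not_lt] at hnt
        exact le_antisymm hnt (hS2sub ht).1
      have h3 : volume (S2 \ Set.Ioi (τval n B a)) = 0 :=
        measure_mono_null h2 Real.volume_singleton
      rw [h3, add_zero, hS2vol] at h1
      rw [← h1]
      exact measure_mono fun t ht => ⟨Or.inr ht.1, ht.2⟩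
    -- split of total volume
    have htot : volume (U ∩ Set.Iic (τval n B a)) + volume (U ∩ Set.Ioi (τval n B a))
        = volume U := by
      have h1 := measure_inter_add_diff (μ := volume) U (measurableSet_Iic (a := τval n B a))
      rwa [show U \ Set.Iic (τval n B a) = U ∩ Set.Ioi (τval n B a) by
        ext t
        simp only [Set.mem_diff, Set.mem_inter_iff, Set.mem_Iic, Set.mem_Ioi, not_le]] at h1
    have hfinL : volume (U ∩ Set.Iic (τval n B a)) ≠ ⊤ := hfin Set.inter_subset_left
    have hfinR : volume (U ∩ Set.Ioi (τval n B a)) ≠ ⊤ := hfin Set.inter_subset_left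
    -- real versions
    have rtot : (volume (U ∩ Set.Iic (τval n B a))).toReal
        + (volume (U ∩ Set.Ioi (τval n B a))).toReal ≤ 2 * Wval n B := by
      rw [← ENNReal.toReal_add hfinL hfinR, htot]
      exact hUr
    have rL : (∑ k, xval n B k) + ∑ i, (volume (Dset n B a s i ∩ Set.Iio (τval n B a))).toReal
        ≤ (volume (U ∩ Set.Iic (τval n B a))).toReal := by
      have h5 := ENNReal.toReal_mono hfinL hleft
      rwa [ENNReal.toReal_add ENNReal.ofReal_ne_top (ENNReal.sum_ne_top.2 fun i _ => hfinDL i),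
        ENNReal.toReal_ofReal hsx0, ENNReal.toReal_sum fun i _ => hfinDL i] at h5
    have rR : (∑ k, xval n B k) + ∑ i, (volume (Dset n B a s i ∩ Set.Ioi (τval n B a))).toReal
        ≤ (volume (U ∩ Set.Ioi (τval n B a))).toReal := by
      have h5 := ENNReal.toReal_mono hfinR hright
      rwa [ENNReal.toReal_add ENNReal.ofReal_ne_top (ENNReal.sum_ne_top.2 fun i _ => hfinDR i),
        ENNReal.toReal_ofReal hsx0, ENNReal.toReal_sum fun i _ => hfinDR i] at h5
    have rWL : Wval n B ≤ (volume (U ∩ Set.Iic (τval n B a))).toReal := by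
      have h5 := ENNReal.toReal_mono hfinL hWL
      rwa [ENNReal.toReal_ofReal hWnn] at h5
    have rWR : Wval n B ≤ (volume (U ∩ Set.Ioi (τval n B a))).toReal := by
      have h5 := ENNReal.toReal_mono hfinR hWR
      rwa [ENNReal.toReal_ofReal hWnn] at h5
    have hdLB : ∑ i, (volume (Dset n B a s i ∩ Set.Iio (τval n B a))).toReal ≤ B := by
      rw [hWeq] at rtot rWL rWR
      linarith
    have hdRB : ∑ i, (volume (Dset n B a s i ∩ Set.Ioi (τval n B a))).toReal ≤ B := by
      rw [hWeq] at rtot rWL rWR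
      linarith
    -- split of each D i
    have hsplitD : ∀ i, (volume (Dset n B a s i)).toReal
        = (volume (Dset n B a s i ∩ Set.Iio (τval n B a))).toReal
          + (volume (Dset n B a s i ∩ Set.Ioi (τval n B a))).toReal := by
      intro i
      have h1 := measure_inter_add_diff (μ := volume) (Dset n B a s i)
        (measurableSet_Iio (a := τval n B a))
      have h2 : Dset n B a s i \ Set.Iio (τval n B a)
          = Dset n B a s i ∩ Set.Ioi (τval n B a) := by
        ext t
        constructor
        · rintro ⟨ht, hnt⟩
          simp only [Set.mem_Iio, not_lt] at hnt
          refine ⟨ht, ?_⟩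
          simp only [Set.mem_Ioi]
          exact lt_of_le_of_ne hnt fun h => ht.2 h.symm
        · rintro ⟨ht, hgt⟩
          simp only [Set.mem_Ioi] at hgt
          exact ⟨ht, by simp only [Set.mem_Iio, not_lt]; exact le_of_lt hgt⟩
      rw [h2] at h1
      calc (volume (Dset n B a s i)).toReal
          = ((volume (Dset n B a s i ∩ Set.Iio (τval n B a))
              + volume (Dset n B a s i ∩ Set.Ioi (τval n B a)))).toReal := by rw [h1]
        _ = _ := ENNReal.toReal_add (hfinDL i) (hfinDR i)
    -- no middle placement
    have hnomid : ∀ i, (s i < Rval n B a i + xval n B i) ∨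
        (2 * τval n B a - Rval n B a i - xval n B i < s i + (xval n B i + (a i:ℝ))) := by
      intro i
      by_contra hcon
      push_neg at hcon
      obtain ⟨h1, h2⟩ := hcon
      have hbig := ((hkey i).2.2.2 h1).2 h2
      have hsum_d : ∑ k, (volume (Dset n B a s k)).toReal ≤ 2 * B := by
        calc ∑ k, (volume (Dset n B a s k)).toReal
            = ∑ k, ((volume (Dset n B a s k ∩ Set.Iio (τval n B a))).toReal
              + (volume (Dset n B a s k ∩ Set.Ioi (τval n B a))).toReal) :=
              Finset.sum_congr rfl fun k _ => hsplitD k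
          _ = ∑ k, (volume (Dset n B a s k ∩ Set.Iio (τval n B a))).toReal
              + ∑ k, (volume (Dset n B a s k ∩ Set.Ioi (τval n B a))).toReal :=
              Finset.sum_add_distrib
          _ ≤ (B:ℝ) + B := add_le_add hdLB hdRB
          _ = 2 * B := by ring
      have hone : (volume (Dset n B a s i)).toReal - (a i:ℝ)
          ≤ ∑ k, ((volume (Dset n B a s k)).toReal - (a k:ℝ)) :=
        Finset.single_le_sum (f := fun k => (volume (Dset n B a s k)).toReal - (a k:ℝ))
          (fun k _ => show (0:ℝ) ≤ (volume (Dset n B a s k)).toReal - (a k:ℝ) by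
            linarith [(hkey k).1]) (Finset.mem_univ i)
      have hsa : ∑ k, ((volume (Dset n B a s k)).toReal - (a k:ℝ))
          = ∑ k, (volume (Dset n B a s k)).toReal - 2 * B := by
        rw [Finset.sum_sub_distrib, hsumR]
      linarith
    -- the partition
    refine ⟨Finset.univ.filter (fun i => s i < Rval n B a i + xval n B i), ?_⟩
    have hmemL : ∀ i ∈ Finset.univ.filter (fun i => s i < Rval n B a i + xval n B i),
        (a i:ℝ) ≤ (volume (Dset n B a s i ∩ Set.Iio (τval n B a))).toReal := by
      intro i hi
      have hiP : s i < Rval n B a i + xval n B i := (Finset.mem_filter.1 hi).2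
      have hsubL : Dset n B a s i ⊆ gapL n B a i := (hkey i).2.2.1 hiP
      have hzero : Dset n B a s i ∩ Set.Ioi (τval n B a) = ∅ := by
        ext t
        simp only [Set.mem_inter_iff, Set.mem_empty_iff_false, iff_false, not_and]
        intro htD htgt
        have h5 := gapL_subset_Iio (B := B) i (hsubL htD)
        simp only [Set.mem_Iio] at h5
        simp only [Set.mem_Ioi] at htgt
        linarith
      have hz2 : (volume (Dset n B a s i ∩ Set.Ioi (τval n B a))).toReal = 0 := by
        rw [hzero]
        simp
      have h6 := hsplitD i
      have h7 := (hkey i).1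
      linarith
    have hmemR : ∀ i ∈ Finset.univ.filter (fun i => ¬ (s i < Rval n B a i + xval n B i)),
        (a i:ℝ) ≤ (volume (Dset n B a s i ∩ Set.Ioi (τval n B a))).toReal := by
      intro i hi
      have hiP : ¬ (s i < Rval n B a i + xval n B i) := (Finset.mem_filter.1 hi).2
      have hR : 2 * τval n B a - Rval n B a i - xval n B i < s i + (xval n B i + (a i:ℝ)) := by
        rcases hnomid i with h | h
        · exact absurd h hiP
        · exact h
      have hsubR : Dset n B a s i ⊆ gapR n B a i := ((hkey i).2.2.2 (not_lt.1 hiP)).1 hR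
      have hzero : Dset n B a s i ∩ Set.Iio (τval n B a) = ∅ := by
        ext t
        simp only [Set.mem_inter_iff, Set.mem_empty_iff_false, iff_false, not_and]
        intro htD htlt
        have h5 := gapR_subset_Ioi (B := B) i (hsubR htD)
        simp only [Set.mem_Ioi] at h5
        simp only [Set.mem_Iio] at htlt
        linarith
      have hz2 : (volume (Dset n B a s i ∩ Set.Iio (τval n B a))).toReal = 0 := by
        rw [hzero]
        simp
      have h6 := hsplitD i
      have h7 := (hkey i).1
      linarith
    have hSa : ∑ i ∈ Finset.univ.filter (fun i => s i < Rval n B a i + xval n B i), (a i:ℝ)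
        ≤ B := by
      calc ∑ i ∈ Finset.univ.filter (fun i => s i < Rval n B a i + xval n B i), (a i:ℝ)
          ≤ ∑ i ∈ Finset.univ.filter (fun i => s i < Rval n B a i + xval n B i),
            (volume (Dset n B a s i ∩ Set.Iio (τval n B a))).toReal :=
            Finset.sum_le_sum hmemL
        _ ≤ ∑ i, (volume (Dset n B a s i ∩ Set.Iio (τval n B a))).toReal :=
            Finset.sum_le_sum_of_subset_of_nonneg (Finset.filter_subset _ _)
              fun k _ _ => ENNReal.toReal_nonneg
        _ ≤ B := hdLB
    have hSca : ∑ i ∈ Finset.univ.filter (fun i => ¬ (s i < Rval n B a i + xval n B i)), (a i:ℝ)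
        ≤ B := by
      calc ∑ i ∈ Finset.univ.filter (fun i => ¬ (s i < Rval n B a i + xval n B i)), (a i:ℝ)
          ≤ ∑ i ∈ Finset.univ.filter (fun i => ¬ (s i < Rval n B a i + xval n B i)),
            (volume (Dset n B a s i ∩ Set.Ioi (τval n B a))).toReal :=
            Finset.sum_le_sum hmemR
        _ ≤ ∑ i, (volume (Dset n B a s i ∩ Set.Ioi (τval n B a))).toReal :=
            Finset.sum_le_sum_of_subset_of_nonneg (Finset.filter_subset _ _)
              fun k _ _ => ENNReal.toReal_nonneg
        _ ≤ B := hdRB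
    have htwo : ∑ i ∈ Finset.univ.filter (fun i => s i < Rval n B a i + xval n B i), (a i:ℝ)
        + ∑ i ∈ Finset.univ.filter (fun i => ¬ (s i < Rval n B a i + xval n B i)), (a i:ℝ)
        = 2 * B := by
      rw [Finset.sum_filter_add_sum_filter_not]
      exact hsumR
    have hfinal : ∑ i ∈ Finset.univ.filter (fun i => s i < Rval n B a i + xval n B i), (a i:ℝ)
        = B := by linarith
    exact_mod_cast hfinal
  · -- easy direction
    rintro ⟨S, hS⟩
    have hSR : ∑ i ∈ S, ((a i : ℝ)) = B := by exact_mod_cast hS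
    set c : Fin n → ℝ := fun i => if i ∈ S then (a i : ℝ) else 0 with hc
    set c' : Fin n → ℝ := fun i => if i ∈ S then 0 else (a i : ℝ) with hc'
    have hc0 : ∀ i, 0 ≤ c i := by
      intro i
      rw [hc]
      by_cases h : i ∈ S <;> simp [h]
    have hc'0 : ∀ i, 0 ≤ c' i := by
      intro i
      rw [hc']
      by_cases h : i ∈ S <;> simp [h]
    have hca : ∀ i, c i ≤ (a i : ℝ) := by
      intro i
      rw [hc]
      by_cases h : i ∈ S <;> simp [h]
    have hc'a : ∀ i, c' i ≤ (a i : ℝ) := by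
      intro i
      rw [hc']
      by_cases h : i ∈ S <;> simp [h]
    have hcc' : ∀ i, c i + c' i = (a i : ℝ) := by
      intro i
      rw [hc, hc']
      by_cases h : i ∈ S <;> simp [h]
    have hsc : ∑ i, c i = B := by
      rw [hc]
      rw [Finset.sum_ite_mem]
      simpa using hSR
    have hscp : ∑ i, c' i = B := by
      have h1 : ∑ i, (c i + c' i) = 2 * B := by
        calc ∑ i, (c i + c' i) = ∑ i, ((a i : ℝ)) := Finset.sum_congr rfl fun i _ => hcc' i
          _ = 2 * B := hsumR
      rw [Finset.sum_add_distrib, hsc] at h1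
      linarith
    have hvolS1 : volume (⋃ i, Set.Icc (Rval n B a i) (Rval n B a i + xval n B i + c i))
        = ENNReal.ofReal (Wval n B) := by
      have hdisj : Pairwise (Function.onFun Disjoint fun i =>
          Set.Icc (Rval n B a i) (Rval n B a i + xval n B i + c i)) := by
        have hlt : ∀ i j : Fin n, i < j → Rval n B a i + xval n B i + c i < Rval n B a j := by
          intro i j hij
          have h1 := hRlt i j hij
          have h2 := hxp i
          have h3 := hca i
          linarith
        intro i j hij
        rcases lt_or_gt_of_ne hij with h | h
        · exact Icc_disj (hlt i j h)
        · exact (Icc_disj (hlt j i h)).symm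
      rw [measure_iUnion hdisj (fun i => measurableSet_Icc), tsum_fintype]
      calc ∑ i, volume (Set.Icc (Rval n B a i) (Rval n B a i + xval n B i + c i))
          = ∑ i, ENNReal.ofReal (xval n B i + c i) := by
            refine Finset.sum_congr rfl fun i _ => ?_
            rw [Real.volume_Icc]
            congr 1
            ring
        _ = ENNReal.ofReal (∑ i, (xval n B i + c i)) :=
            (ENNReal.ofReal_sum_of_nonneg fun i _ => by
              have h1 := xval_nonneg (B := B) (n := n) i
              have h2 := hc0 i
              linarith).symm
        _ = ENNReal.ofReal (Wval n B) := by
            rw [Finset.sum_add_distrib, hsc, hWeq]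
            congr 1
            ring
    have hvolS2 : volume (⋃ i, Set.Icc (2 * τval n B a - Rval n B a i - xval n B i - c' i)
          (2 * τval n B a - Rval n B a i)) = ENNReal.ofReal (Wval n B) := by
      have hdisj : Pairwise (Function.onFun Disjoint fun i =>
          Set.Icc (2 * τval n B a - Rval n B a i - xval n B i - c' i)
            (2 * τval n B a - Rval n B a i)) := by
        have hlt : ∀ i j : Fin n, i < j →
            2 * τval n B a - Rval n B a j
              < 2 * τval n B a - Rval n B a i - xval n B i - c' i := by
          intro i j hij
          have h1 := hRlt i j hij
          have h2 := hxp i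
          have h3 := hc'a i
          linarith
        intro i j hij
        rcases lt_or_gt_of_ne hij with h | h
        · exact (Icc_disj (hlt i j h)).symm
        · exact Icc_disj (hlt j i h)
      rw [measure_iUnion hdisj (fun i => measurableSet_Icc), tsum_fintype]
      calc ∑ i, volume (Set.Icc (2 * τval n B a - Rval n B a i - xval n B i - c' i)
            (2 * τval n B a - Rval n B a i))
          = ∑ i, ENNReal.ofReal (xval n B i + c' i) := by
            refine Finset.sum_congr rfl fun i _ => ?_
            rw [Real.volume_Icc]
            congr 1
            ring
        _ = ENNReal.ofReal (∑ i, (xval n B i + c' i)) :=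
            (ENNReal.ofReal_sum_of_nonneg fun i _ => by
              have h1 := xval_nonneg (B := B) (n := n) i
              have h2 := hc'0 i
              linarith).symm
        _ = ENNReal.ofReal (Wval n B) := by
            rw [Finset.sum_add_distrib, hscp, hWeq]
            congr 1
            ring
    refine ⟨fun i => if i ∈ S then Rval n B a i
        else 2 * τval n B a - Rval n B a i - xval n B i - (a i : ℝ),
      ⋃ i, Set.Icc (Rval n B a i) (Rval n B a i + xval n B i + c i),
      ⋃ i, Set.Icc (2 * τval n B a - Rval n B a i - xval n B i - c' i)
        (2 * τval n B a - Rval n B a i),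
      ?_, MeasurableSet.iUnion fun i => measurableSet_Icc, ?_, hvolS1,
      MeasurableSet.iUnion fun i => measurableSet_Icc, ?_, hvolS2, ?_⟩
    · intro i
      have h1 := hRt i
      have h2 := hxp i
      have h3 := hαk i
      have h4 := hR0 i
      by_cases h : i ∈ S
      · simp only [h, if_true]
        constructor <;> linarith
      · simp only [h, if_false]
        constructor <;> linarith
    · intro t ht
      rcases Set.mem_iUnion.1 ht with ⟨k, hk⟩
      have h1 := hRt k
      have h2 := hxp k
      have h3 := hca k
      have h4 := hR0 k
      exact ⟨by linarith [hk.1], by linarith [hk.2]⟩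
    · intro t ht
      rcases Set.mem_iUnion.1 ht with ⟨k, hk⟩
      have h1 := hRt k
      have h2 := hxp k
      have h3 := hc'a k
      have h4 := hR0 k
      exact ⟨by linarith [hk.1], by linarith [hk.2]⟩
    · -- busy time bound
      have hsub : ((⋃ i, Set.Icc (Rval n B a i) (Rval n B a i + xval n B i)) ∪
              (⋃ i, Set.Icc (2 * τval n B a - Rval n B a i - xval n B i)
                    (2 * τval n B a - Rval n B a i)) ∪
              (⋃ i, Set.Icc (if i ∈ S then Rval n B a i
                  else 2 * τval n B a - Rval n B a i - xval n B i - (a i : ℝ))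
                ((if i ∈ S then Rval n B a i
                  else 2 * τval n B a - Rval n B a i - xval n B i - (a i : ℝ))
                  + (xval n B i + (a i : ℝ)))) ∪
              (⋃ i, Set.Icc (Rval n B a i) (Rval n B a i + xval n B i + c i)) ∪
              (⋃ i, Set.Icc (2 * τval n B a - Rval n B a i - xval n B i - c' i)
                (2 * τval n B a - Rval n B a i)))
          ⊆ (⋃ i, Set.Icc (Rval n B a i) (Rval n B a i + xval n B i + c i)) ∪
            (⋃ i, Set.Icc (2 * τval n B a - Rval n B a i - xval n B i - c' i)
              (2 * τval n B a - Rval n B a i)) := by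
        rintro t ((((ht | ht) | ht) | ht) | ht)
        · rcases Set.mem_iUnion.1 ht with ⟨k, hk⟩
          exact Or.inl (Set.mem_iUnion.2 ⟨k, hk.1, by linarith [hk.2, hc0 k]⟩)
        · rcases Set.mem_iUnion.1 ht with ⟨k, hk⟩
          exact Or.inr (Set.mem_iUnion.2 ⟨k, by linarith [hk.1, hc'0 k], hk.2⟩)
        · rcases Set.mem_iUnion.1 ht with ⟨k, hk⟩
          by_cases h : k ∈ S
          · rw [if_pos h] at hk
            refine Or.inl (Set.mem_iUnion.2 ⟨k, hk.1, ?_⟩)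
            have h5 : c k = (a k : ℝ) := by rw [hc]; simp [h]
            linarith [hk.2]
          · rw [if_neg h] at hk
            refine Or.inr (Set.mem_iUnion.2 ⟨k, ?_, ?_⟩)
            · have h5 : c' k = (a k : ℝ) := by rw [hc']; simp [h]
              linarith [hk.1]
            · linarith [hk.2]
        · exact Or.inl ht
        · exact Or.inr ht
      refine le_trans (measure_mono hsub) ?_
      refine le_trans (measure_union_le _ _) ?_
      rw [hvolS1, hvolS2, ← ENNReal.ofReal_add hWnn hWnn]
      apply le_of_eq
      congr 1
      ring
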